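/- Let (l_T,t,r_T;r_B,b,l_B) be a sextuple of 01-words of lengths (K,L,M;N,K+L−N,M+N−K) with |l_T|_0 + |t|_0 = |b|_0 + |r_B|_0 and |t|_1 + |r_T|_1 = |l_B|_1 + |b|_1. In every hexagonal blue-red path-tangle with boundary (l_T,t,r_T;r_B,b,l_B), the total number of (−1,−1)-steps and (−2,0)-steps over all blue paths equals d(r_B) + d(b) + |r_B|_0·|b|_1 − d(l_T) − d(t) − |l_T|_1·|t|_0, and the total number of (1,−1)-steps and (2,0)-steps over all red paths equals d(b) + d(l_B) + |b|_0·|l_B|_1 − d(t) − d(r_T) − |t|_1·|r_T|_0. -/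

import Mathlib

open scoped Classical

namespace HFPLpaper2014

noncomputable section

/-! ### 01-words.  `true` represents the letter 1, `false` the letter 0. -/

abbrev Word := List Bool

/-- `|ω|₁`, the number of occurrences of the letter 1. -/
def c1 (w : Word) : ℕ := w.count true

/-- `|ω|₀`, the number of occurrences of the letter 0. -/
def c0 (w : Word) : ℕ := w.count false

/-- `d(ω)`, the number of inversions of `ω`, i.e. of pairs `k < ℓ` with
`ω_k = 1` and `ω_ℓ = 0`. -/
def dinv : Word → ℕ
  | [] => 0
  | x :: xs => (if x = true then xs.count false else 0) + dinv xs

/-- The dominance order `ω ≤ σ` on 01-words: every prefix of `ω` contains at most as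
many ones as the corresponding prefix of `σ`. -/
def wordLE (u v : Word) : Prop :=
  ∀ m : ℕ, (u.take m).count true ≤ (v.take m).count true

/-- the complement `ω̄` of a word -/
def wbar (w : Word) : Word := w.map (fun x => !x)

/-- `ω* = reverse of the complement` of a word -/
def wstar (w : Word) : Word := (w.map (fun x => !x)).reverse
/-! ### Hexagonal blue-red path-tangles.  All coordinates are doubled so that
the half-integer coordinates of the paper become integers. -/

/-- the (1-based) positions of the letter 0 in a word, in increasing order -/
def zeroPos (w : Word) : List ℕ :=
  ((List.range w.length).filter (fun i => !(w.getD i true))).map (fun i => i + 1)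

/-- the (1-based) positions of the letter 1 in a word, in increasing order -/
def onePos (w : Word) : List ℕ :=
  ((List.range w.length).filter (fun i => w.getD i false)).map (fun i => i + 1)

/-- the starting point `D_{k+1}` of the `(k+1)`-st blue path (doubled coordinates) -/
def Db (K L M N : ℕ) (rB b : Word) (k : ℕ) : ℤ × ℤ :=
  let i : ℤ := ((zeroPos (b ++ rB)).getD k 0 : ℤ)
  if k < c0 b then (2 * ((M : ℤ) + N - K) - 3 + 4 * i, 2 * ((K : ℤ) - M - N))
  else (2 * ((M : ℤ) + L) - 1 + 2 * i, -(2 * ((M : ℤ) + L)) - 2 + 2 * i)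

/-- the ending point `E_{k+1}` of the `(k+1)`-st blue path (doubled coordinates) -/
def Eb (K : ℕ) (lT t : Word) (k : ℕ) : ℤ × ℤ :=
  let j : ℤ := ((zeroPos (lT ++ t)).getD k 0 : ℤ)
  if k < c0 lT then (2 * j - 1, 2 * j - 2) else (4 * j - 2 * (K : ℤ) - 1, 2 * (K : ℤ) - 2)

/-- the starting point `D'_{k+1}` of the `(k+1)`-st red path (doubled coordinates) -/
def Dr (K M N : ℕ) (lB b : Word) (k : ℕ) : ℤ × ℤ :=
  let i : ℤ := ((onePos (lB ++ b)).getD k 0 : ℤ)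
  if k < c1 lB then (2 * i - 1, -(2 * i))
  else (4 * i + 2 * ((K : ℤ) - M - N) - 1, 2 * ((K : ℤ) - M - N))

/-- the ending point `E'_{k+1}` of the `(k+1)`-st red path (doubled coordinates) -/
def Er (K L : ℕ) (t rT : Word) (k : ℕ) : ℤ × ℤ :=
  let j : ℤ := ((onePos (t ++ rT)).getD k 0 : ℤ)
  if k < c1 t then (2 * (K : ℤ) + 4 * j - 3, 2 * (K : ℤ) - 2)
  else (2 * ((K : ℤ) + L) + 2 * j - 1, 2 * ((K : ℤ) + L) - 2 * j)

/-- the list of steps of a path given by its list of vertices -/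
def psteps (p : List (ℤ × ℤ)) : List ((ℤ × ℤ) × (ℤ × ℤ)) := p.zip p.tail

/-- A blue path from `D` to `E`, using the (doubled) steps `(-2,2)`, `(-2,-2)` and
`(-4,0)` and staying between the (doubled) lines `y = 2(K-M-N)` and `y = 2K-2`. -/
def IsBPath (K M N : ℕ) (D E : ℤ × ℤ) (p : List (ℤ × ℤ)) : Prop :=
  p.head? = some D ∧ p.getLast? = some E ∧
  List.Chain' (fun a c => c = (a.1 - 2, a.2 + 2) ∨ c = (a.1 - 2, a.2 - 2) ∨
    c = (a.1 - 4, a.2)) p ∧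
  ∀ q ∈ p, 2 * ((K : ℤ) - M - N) ≤ q.2 ∧ q.2 ≤ 2 * (K : ℤ) - 2

/-- A red path from `D` to `E`, using the (doubled) steps `(2,2)`, `(2,-2)` and
`(4,0)` and staying between the same lines. -/
def IsRPath (K M N : ℕ) (D E : ℤ × ℤ) (p : List (ℤ × ℤ)) : Prop :=
  p.head? = some D ∧ p.getLast? = some E ∧
  List.Chain' (fun a c => c = (a.1 + 2, a.2 + 2) ∨ c = (a.1 + 2, a.2 - 2) ∨
    c = (a.1 + 4, a.2)) p ∧
  ∀ q ∈ p, 2 * ((K : ℤ) - M - N) ≤ q.2 ∧ q.2 ≤ 2 * (K : ℤ) - 2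

/-- a point is used by a path if it is a vertex of the path or the midpoint of one
of its horizontal steps -/
def usedPt (p : List (ℤ × ℤ)) (q : ℤ × ℤ) : Prop :=
  q ∈ p ∨ ∃ s ∈ psteps p, (s.2 = (s.1.1 - 4, s.1.2) ∧ q = (s.1.1 - 2, s.1.2)) ∨
    (s.2 = (s.1.1 + 4, s.1.2) ∧ q = (s.1.1 + 2, s.1.2))

/-- a blue diagonal step `s` and a red diagonal step `u` cross: they have the same
midpoint and are perpendicular -/
def crossing (s u : (ℤ × ℤ) × (ℤ × ℤ)) : Prop :=
  (s.2 = (s.1.1 - 2, s.1.2 + 2) ∧ u.2 = (u.1.1 + 2, u.1.2 + 2) ∧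
    s.1.1 - 1 = u.1.1 + 1 ∧ s.1.2 + 1 = u.1.2 + 1) ∨
  (s.2 = (s.1.1 - 2, s.1.2 - 2) ∧ u.2 = (u.1.1 + 2, u.1.2 - 2) ∧
    s.1.1 - 1 = u.1.1 + 1 ∧ s.1.2 - 1 = u.1.2 - 1)

/-- A hexagonal blue-red path-tangle with boundary `(l_T,t,r_T;r_B,b,l_B)`. -/
structure BlueRed (K L M N : ℕ) (lT t rT rB b lB : Word) where
  Bp : Fin (c0 lT + c0 t) → List (ℤ × ℤ)
  Rp : Fin (c1 t + c1 rT) → List (ℤ × ℤ)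
  bluePath : ∀ k : Fin (c0 lT + c0 t),
    IsBPath K M N (Db K L M N rB b (k : ℕ)) (Eb K lT t (k : ℕ)) (Bp k)
  redPath : ∀ k : Fin (c1 t + c1 rT),
    IsRPath K M N (Dr K M N lB b (k : ℕ)) (Er K L t rT (k : ℕ)) (Rp k)
  blueDisj : ∀ k k', k ≠ k' → ∀ q, q ∈ Bp k → q ∉ Bp k'
  redDisj : ∀ k k', k ≠ k' → ∀ q, q ∈ Rp k → q ∉ Rp k'
  noCross : ∀ k k', ∀ s ∈ psteps (Bp k), ∀ u ∈ psteps (Rp k'), ¬ crossing s u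
  blueMid : ∀ k, ∀ s ∈ psteps (Bp k), s.2 = (s.1.1 - 4, s.1.2) →
    ∃ k', usedPt (Rp k') (s.1.1 - 2, s.1.2)
  redMid : ∀ k, ∀ s ∈ psteps (Rp k), s.2 = (s.1.1 + 4, s.1.2) →
    ∃ k', usedPt (Bp k') (s.1.1 + 2, s.1.2)

/-! ### Auxiliary lemmas -/

lemma c0_append (u v : Word) : c0 (u ++ v) = c0 u + c0 v := List.count_append
lemma c1_append (u v : Word) : c1 (u ++ v) = c1 u + c1 v := List.count_append

lemma dinv_append (u v : Word) : dinv (u ++ v) = dinv u + c1 u * c0 v + dinv v := by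
  induction u with
  | nil => simp [dinv, c1]
  | cons x u ih =>
    cases x <;>
      simp [dinv, List.count_append, c1, c0, List.count_cons, ih] <;> ring

lemma zeroPos_cons (x : Bool) (w : Word) :
    zeroPos (x :: w) = (if x then [] else [1]) ++ (zeroPos w).map (· + 1) := by
  cases x <;>
    simp [zeroPos, List.range_succ_eq_map, List.filter_map, List.map_map, Function.comp_def,
          List.getElem?_cons_succ, Nat.succ_eq_add_one]

lemma onePos_cons (x : Bool) (w : Word) :
    onePos (x :: w) = (if x then [1] else []) ++ (onePos w).map (· + 1) := by
  cases x <;>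
    simp [onePos, List.range_succ_eq_map, List.filter_map, List.map_map, Function.comp_def,
          List.getElem?_cons_succ, Nat.succ_eq_add_one]

lemma c0_cons (x : Bool) (w : Word) : c0 (x :: w) = (if x then 0 else 1) + c0 w := by
  cases x <;> simp [c0, List.count_cons] <;> omega

lemma c1_cons (x : Bool) (w : Word) : c1 (x :: w) = (if x then 1 else 0) + c1 w := by
  cases x <;> simp [c1, List.count_cons] <;> omega

lemma dinv_cons (x : Bool) (w : Word) :
    dinv (x :: w) = (if x then c0 w else 0) + dinv w := by
  cases x <;> simp [dinv, c0]

lemma zeroPos_length (w : Word) : (zeroPos w).length = c0 w := by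
  induction w with
  | nil => simp [zeroPos, c0]
  | cons x w ih =>
    cases x <;> simp [zeroPos_cons, c0, List.count_cons, ih] <;> omega

lemma onePos_length (w : Word) : (onePos w).length = c1 w := by
  induction w with
  | nil => simp [onePos, c1]
  | cons x w ih =>
    cases x <;> simp [onePos_cons, c1, List.count_cons, ih] <;> omega

lemma c0_add_c1 (w : Word) : c0 w + c1 w = w.length := by
  induction w with
  | nil => simp [c0, c1]
  | cons x w ih => cases x <;> simp [c0_cons, c1_cons] <;> omega

lemma zeroPos_sum (w : Word) :
    2 * (zeroPos w).sum = c0 w * (c0 w + 1) + 2 * dinv w := by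
  induction w with
  | nil => simp [zeroPos, c0, dinv]
  | cons x w ih =>
    have hl : ((zeroPos w).map (· + 1)).sum = (zeroPos w).sum + c0 w := by
      rw [← zeroPos_length w]
      induction zeroPos w with
      | nil => simp
      | cons a l ihl => simp [ihl]; ring
    cases x <;> simp [zeroPos_cons, dinv_cons, c0_cons, hl] <;> nlinarith [ih]

lemma onePos_sum (w : Word) :
    2 * (onePos w).sum + 2 * dinv w = c1 w * (c1 w + 1) + 2 * (c0 w * c1 w) := by
  induction w with
  | nil => simp [onePos, c1, dinv]
  | cons x w ih =>
    have hl : ((onePos w).map (· + 1)).sum = (onePos w).sum + c1 w := by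
      rw [← onePos_length w]
      induction onePos w with
      | nil => simp
      | cons a l ihl => simp [ihl]; ring
    cases x <;> simp [onePos_cons, dinv_cons, c0_cons, c1_cons, hl] <;> nlinarith [ih]

lemma chain_sum {α : Type*} (R : α → α → Prop) (f : α → ℤ) (P : α × α → Bool)
    (hstep : ∀ a c, R a c → f c = f a + (if P (a, c) then 4 else 0)) :
    ∀ p : List α, List.Chain' R p → ∀ D E, p.head? = some D → p.getLast? = some E →
      f E = f D + 4 * ((p.zip p.tail).countP P) := by
  intro p
  induction p with
  | nil => intro _ D E hD; simp at hD
  | cons a q ih =>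
    cases q with
    | nil =>
      intro _ D E hD hE
      simp at hD hE
      subst hD; subst hE; simp
    | cons c r =>
      intro hch D E hD hE
      simp at hD
      subst hD
      have h1 : R a c := hch.rel_head
      have h2 := ih hch.tail c E rfl (by rw [← hE]; simp [List.getLast?_cons_cons])
      have h3 := hstep a c h1
      have hz : ((a :: c :: r).zip (a :: c :: r).tail).countP P
          = (if P (a, c) then 1 else 0) + ((c :: r).zip (c :: r).tail).countP P := by
        simp [List.zip_cons_cons, List.countP_cons]
        split <;> omega
      rw [hz]
      push_cast
      split at h3 <;> simp_all <;> linarith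

lemma sum_getD (l : List ℕ) : ∑ k : Fin l.length, l.getD k 0 = l.sum := by
  induction l with
  | nil => simp
  | cons a l ih =>
    rw [show (a :: l).length = l.length + 1 from rfl, Fin.sum_univ_succ]
    simp only [List.getD_cons_zero, Fin.val_succ, List.getD_cons_succ, ih, List.sum_cons,
      Fin.val_zero]

lemma sum_getD' (l : List ℕ) (n : ℕ) (h : l.length = n) :
    ∑ k : Fin n, l.getD k 0 = l.sum := by subst h; exact sum_getD l

lemma Db_sum (K L M N : ℕ) (rB b : Word) (k : ℕ) :
    (Db K L M N rB b k).1 + (Db K L M N rB b k).2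
      = 4 * ((zeroPos (b ++ rB)).getD k 0 : ℤ) - 3 := by
  unfold Db; split <;> simp <;> ring

lemma Eb_sum (K : ℕ) (lT t : Word) (k : ℕ) :
    (Eb K lT t k).1 + (Eb K lT t k).2
      = 4 * ((zeroPos (lT ++ t)).getD k 0 : ℤ) - 3 := by
  unfold Eb; split <;> simp <;> ring

lemma Dr_diff (K M N : ℕ) (lB b : Word) (k : ℕ) :
    (Dr K M N lB b k).1 - (Dr K M N lB b k).2
      = 4 * ((onePos (lB ++ b)).getD k 0 : ℤ) - 1 := by
  unfold Dr; split <;> simp <;> ring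

lemma Er_diff (K L : ℕ) (t rT : Word) (k : ℕ) :
    (Er K L t rT k).1 - (Er K L t rT k).2
      = 4 * ((onePos (t ++ rT)).getD k 0 : ℤ) - 1 := by
  unfold Er; split <;> simp <;> ring

/-- In every hexagonal blue-red path-tangle, the total number of
`(-1,-1)`- and `(-2,0)`-steps of the blue paths is
`d(r_B) + d(b) + |r_B|₀|b|₁ - d(l_T) - d(t) - |l_T|₁|t|₀`, and the total number of
`(1,-1)`- and `(2,0)`-steps of the red paths is
`d(b) + d(l_B) + |b|₀|l_B|₁ - d(t) - d(r_T) - |t|₁|r_T|₀`.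
(Coordinates are doubled, so these steps are `(-2,-2)`, `(-4,0)`, `(2,-2)`,
`(4,0)`.) -/
theorem blue_red_step_counts
    (K L M N : ℕ) (hKMN : K ≤ M + N) (hNKL : N ≤ K + L)
    (lT t rT rB b lB : Word)
    (hlT : lT.length = K) (ht : t.length = L) (hrT : rT.length = M)
    (hrB : rB.length = N) (hb : b.length = K + L - N) (hlB : lB.length = M + N - K)
    (h1 : c0 lT + c0 t = c0 b + c0 rB) (h2 : c1 t + c1 rT = c1 lB + c1 b)
    (br : BlueRed K L M N lT t rT rB b lB) :
    ((∑ k : Fin (c0 lT + c0 t), ((psteps (br.Bp k)).countP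
        (fun s => decide (s.2 = (s.1.1 - 2, s.1.2 - 2) ∨ s.2 = (s.1.1 - 4, s.1.2))))) : ℤ) =
      (dinv rB : ℤ) + dinv b + (c0 rB : ℤ) * c1 b - dinv lT - dinv t -
        (c1 lT : ℤ) * c0 t ∧
    ((∑ k : Fin (c1 t + c1 rT), ((psteps (br.Rp k)).countP
        (fun s => decide (s.2 = (s.1.1 + 2, s.1.2 - 2) ∨ s.2 = (s.1.1 + 4, s.1.2))))) : ℤ) =
      (dinv b : ℤ) + dinv lB + (c0 b : ℤ) * c1 lB - dinv t - dinv rT -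
        (c1 t : ℤ) * c0 rT := by
  constructor
  · -- blue paths
    have hlen1 : (zeroPos (b ++ rB)).length = c0 lT + c0 t := by
      rw [zeroPos_length, c0_append]; omega
    have hlen2 : (zeroPos (lT ++ t)).length = c0 lT + c0 t := by
      rw [zeroPos_length, c0_append]
    have key : ∀ k : Fin (c0 lT + c0 t),
        4 * (((psteps (br.Bp k)).countP
          (fun s => decide (s.2 = (s.1.1 - 2, s.1.2 - 2) ∨ s.2 = (s.1.1 - 4, s.1.2)))) : ℤ)
        = 4 * ((zeroPos (b ++ rB)).getD k 0 : ℤ)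
          - 4 * ((zeroPos (lT ++ t)).getD k 0 : ℤ) := by
      intro k
      obtain ⟨hD, hE, hch, -⟩ := br.bluePath k
      have hstep : ∀ a c : ℤ × ℤ,
          (c = (a.1 - 2, a.2 + 2) ∨ c = (a.1 - 2, a.2 - 2) ∨ c = (a.1 - 4, a.2)) →
          -(c.1 + c.2) = -(a.1 + a.2) +
            (if (fun s : (ℤ × ℤ) × (ℤ × ℤ) =>
              decide (s.2 = (s.1.1 - 2, s.1.2 - 2) ∨ s.2 = (s.1.1 - 4, s.1.2))) (a, c)
              then 4 else 0) := by
        rintro a c (rfl | rfl | rfl) <;> simp [Prod.ext_iff] <;> omega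
      have hcs := chain_sum _ (fun q : ℤ × ℤ => -(q.1 + q.2))
        (fun s : (ℤ × ℤ) × (ℤ × ℤ) =>
          decide (s.2 = (s.1.1 - 2, s.1.2 - 2) ∨ s.2 = (s.1.1 - 4, s.1.2))) hstep (br.Bp k) hch _ _ hD hE
      have h1 := Db_sum K L M N rB b (k : ℕ)
      have h2 := Eb_sum K lT t (k : ℕ)
      simp only [psteps]
      linarith
    have hsum : 4 * ((∑ k : Fin (c0 lT + c0 t), ((psteps (br.Bp k)).countP
          (fun s => decide (s.2 = (s.1.1 - 2, s.1.2 - 2) ∨ s.2 = (s.1.1 - 4, s.1.2))))) : ℤ)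
        = 4 * ((zeroPos (b ++ rB)).sum : ℤ) - 4 * ((zeroPos (lT ++ t)).sum : ℤ) := by
      rw [← sum_getD' (zeroPos (b ++ rB)) _ hlen1, ← sum_getD' (zeroPos (lT ++ t)) _ hlen2]
      push_cast
      rw [Finset.mul_sum, Finset.sum_congr rfl (fun k _ => key k),
        Finset.sum_sub_distrib, ← Finset.mul_sum, ← Finset.mul_sum]
    have z1 := zeroPos_sum (b ++ rB)
    have z2 := zeroPos_sum (lT ++ t)
    have hc1 : c0 (b ++ rB) = c0 lT + c0 t := by rw [c0_append]; omega
    have hc2 : c0 (lT ++ t) = c0 lT + c0 t := c0_append lT t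
    rw [hc1, dinv_append] at z1
    rw [hc2, dinv_append] at z2
    have z1' : (2 * (zeroPos (b ++ rB)).sum : ℤ)
        = ((c0 lT + c0 t : ℕ) : ℤ) * (((c0 lT + c0 t : ℕ) : ℤ) + 1)
          + 2 * ((dinv b : ℤ) + (c1 b : ℤ) * (c0 rB : ℤ) + (dinv rB : ℤ)) := by
      exact_mod_cast congrArg (Nat.cast : ℕ → ℤ) z1
    have z2' : (2 * (zeroPos (lT ++ t)).sum : ℤ)
        = ((c0 lT + c0 t : ℕ) : ℤ) * (((c0 lT + c0 t : ℕ) : ℤ) + 1)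
          + 2 * ((dinv lT : ℤ) + (c1 lT : ℤ) * (c0 t : ℤ) + (dinv t : ℤ)) := by
      exact_mod_cast congrArg (Nat.cast : ℕ → ℤ) z2
    linarith
  · -- red paths
    have hlen1 : (onePos (t ++ rT)).length = c1 t + c1 rT := by
      rw [onePos_length, c1_append]
    have hlen2 : (onePos (lB ++ b)).length = c1 t + c1 rT := by
      rw [onePos_length, c1_append]; omega
    have key : ∀ k : Fin (c1 t + c1 rT),
        4 * (((psteps (br.Rp k)).countP
          (fun s => decide (s.2 = (s.1.1 + 2, s.1.2 - 2) ∨ s.2 = (s.1.1 + 4, s.1.2)))) : ℤ)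
        = 4 * ((onePos (t ++ rT)).getD k 0 : ℤ)
          - 4 * ((onePos (lB ++ b)).getD k 0 : ℤ) := by
      intro k
      obtain ⟨hD, hE, hch, -⟩ := br.redPath k
      have hstep : ∀ a c : ℤ × ℤ,
          (c = (a.1 + 2, a.2 + 2) ∨ c = (a.1 + 2, a.2 - 2) ∨ c = (a.1 + 4, a.2)) →
          c.1 - c.2 = a.1 - a.2 +
            (if (fun s : (ℤ × ℤ) × (ℤ × ℤ) =>
              decide (s.2 = (s.1.1 + 2, s.1.2 - 2) ∨ s.2 = (s.1.1 + 4, s.1.2))) (a, c)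
              then 4 else 0) := by
        rintro a c (rfl | rfl | rfl) <;> simp [Prod.ext_iff] <;> omega
      have hcs := chain_sum _ (fun q : ℤ × ℤ => q.1 - q.2)
        (fun s : (ℤ × ℤ) × (ℤ × ℤ) =>
          decide (s.2 = (s.1.1 + 2, s.1.2 - 2) ∨ s.2 = (s.1.1 + 4, s.1.2))) hstep (br.Rp k) hch _ _ hD hE
      have h1 := Dr_diff K M N lB b (k : ℕ)
      have h2 := Er_diff K L t rT (k : ℕ)
      simp only [psteps]
      linarith
    have hsum : 4 * ((∑ k : Fin (c1 t + c1 rT), ((psteps (br.Rp k)).countP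
          (fun s => decide (s.2 = (s.1.1 + 2, s.1.2 - 2) ∨ s.2 = (s.1.1 + 4, s.1.2))))) : ℤ)
        = 4 * ((onePos (t ++ rT)).sum : ℤ) - 4 * ((onePos (lB ++ b)).sum : ℤ) := by
      rw [← sum_getD' (onePos (t ++ rT)) _ hlen1, ← sum_getD' (onePos (lB ++ b)) _ hlen2]
      push_cast
      rw [Finset.mul_sum, Finset.sum_congr rfl (fun k _ => key k),
        Finset.sum_sub_distrib, ← Finset.mul_sum, ← Finset.mul_sum]
    have z1 := onePos_sum (t ++ rT)
    have z2 := onePos_sum (lB ++ b)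
    have hc1 : c1 (t ++ rT) = c1 t + c1 rT := c1_append t rT
    have hc2 : c1 (lB ++ b) = c1 t + c1 rT := by rw [c1_append]; omega
    have hc0eq : c0 (t ++ rT) = c0 (lB ++ b) := by
      have e1 := c0_add_c1 (t ++ rT)
      have e2 := c0_add_c1 (lB ++ b)
      have l1 : (t ++ rT).length = L + M := by simp [ht, hrT]
      have l2 : (lB ++ b).length = L + M := by simp [hlB, hb]; omega
      omega
    rw [hc1, dinv_append, hc0eq] at z1
    rw [hc2, dinv_append] at z2
    have z1' : (2 * (onePos (t ++ rT)).sum : ℤ)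
          + 2 * ((dinv t : ℤ) + (c1 t : ℤ) * (c0 rT : ℤ) + (dinv rT : ℤ))
        = ((c1 t + c1 rT : ℕ) : ℤ) * (((c1 t + c1 rT : ℕ) : ℤ) + 1)
          + 2 * (((c0 (lB ++ b) : ℕ) : ℤ) * ((c1 t + c1 rT : ℕ) : ℤ)) := by
      exact_mod_cast congrArg (Nat.cast : ℕ → ℤ) z1
    have z2' : (2 * (onePos (lB ++ b)).sum : ℤ)
          + 2 * ((dinv lB : ℤ) + (c1 lB : ℤ) * (c0 b : ℤ) + (dinv b : ℤ))
        = ((c1 t + c1 rT : ℕ) : ℤ) * (((c1 t + c1 rT : ℕ) : ℤ) + 1)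
          + 2 * (((c0 (lB ++ b) : ℕ) : ℤ) * ((c1 t + c1 rT : ℕ) : ℤ)) := by
      exact_mod_cast congrArg (Nat.cast : ℕ → ℤ) z2
    linarith

end
end HFPLpaper2014
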